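/- Pivoting a graph G on an edge (i,i') where i and i' have no common neighbors and the sets N(i)\{i'} and N(i')\{i} span no edges between them, followed by deleting i and i', yields the graph obtained from G − {i,i'} by adding all edges between N(i)\{i'} and N(i')\{i} (a generalized local complementation between these sets). -/

import Mathlib

set_option maxHeartbeats 2000000
open Finset

/-- Local complementation of a simple graph `G` at a vertex `v`. -/
def localComp {V : Type} (G : SimpleGraph V) (v : V) : SimpleGraph V where
  Adj u w := u ≠ w ∧
    ((G.Adj u w ∧ ¬(G.Adj u v ∧ G.Adj w v)) ∨ (¬G.Adj u w ∧ (G.Adj u v ∧ G.Adj w v)))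
  symm := by
    refine ⟨?_⟩
    intro u w h
    refine ⟨h.1.symm, ?_⟩
    have h2 := h.2
    rw [G.adj_comm w u]
    tauto
  loopless := ⟨fun u h => h.1 rfl⟩

/-- Pivoting on the edge `(i,i')`: the composition of local complementations
`τ_i ∘ τ_{i'} ∘ τ_i`. -/
def pivot {V : Type} (G : SimpleGraph V) (i i' : V) : SimpleGraph V :=
  localComp (localComp (localComp G i) i') i

/-- Pivoting `G` on an edge `(i,i')` where `i` and `i'` have no common
neighbours and no edges run between `N(i)\{i'}` and `N(i')\{i}`, followed by
deleting `i` and `i'`, yields the graph obtained from `G − {i,i'}` by adding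
all edges between `N(i)\{i'}` and `N(i')\{i}` — a generalized local
complementation between these sets. -/
lemma lc_adj {V : Type} (G : SimpleGraph V) (v u w : V) :
    (localComp G v).Adj u w ↔ u ≠ w ∧
      ((G.Adj u w ∧ ¬(G.Adj u v ∧ G.Adj w v)) ∨ (¬G.Adj u w ∧ (G.Adj u v ∧ G.Adj w v))) :=
  Iff.rfl

theorem pivot_glc {V : Type} (G : SimpleGraph V) (i i' : V)
    (hadj : G.Adj i i')
    (hcommon : ∀ u, ¬(G.Adj u i ∧ G.Adj u i'))
    (hnoedge : ∀ u w, G.Adj u i → u ≠ i' → G.Adj w i' → w ≠ i → ¬G.Adj u w) :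
    ∀ u w, u ≠ i → u ≠ i' → w ≠ i → w ≠ i' →
      ((pivot G i i').Adj u w ↔
        (G.Adj u w ∨ (G.Adj u i ∧ G.Adj w i') ∨ (G.Adj w i ∧ G.Adj u i'))) := by
  intro u w hu hu' hw hw'
  have hc1 := hcommon u
  have hc2 := hcommon w
  have hii : G.Adj i' i := hadj.symm
  have hli : ¬ G.Adj i i := G.loopless.irrefl i
  have hli' : ¬ G.Adj i' i' := G.loopless.irrefl i'
  have hne : i ≠ i' := hadj.ne
  rw [pivot]
  simp only [lc_adj]
  by_cases huw : u = w
  · subst huw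
    simp only [ne_eq, not_true_eq_false, false_and, false_or, and_false, false_iff,
      not_false_eq_true, true_and, G.loopless.irrefl u, or_self]
    exact hc1
  · by_cases a : G.Adj u i <;> by_cases b : G.Adj w i <;>
      by_cases c : G.Adj u i' <;> by_cases d : G.Adj w i' <;>
      by_cases e : G.Adj u w <;>
      simp_all [G.adj_comm i u, G.adj_comm i w, G.adj_comm i' u, G.adj_comm i' w,
        G.adj_comm i i'] <;>
      first
        | exact hnoedge u w a hu' d hw e
        | exact hnoedge w u b hw' c hu (G.symm.symm _ _ e)
        | tauto
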